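/- Suppose f : R^n → R is C^2 with L-Lipschitz Hessian. Let d^1,…,d^p span R^n with D = [d^1 ⋯ d^p], all d^i nonzero, and let H ∈ S_n(R) be a matrix such that for all i, |(d^i)ᵀ(H − ∇²f(x^0))d^i| ≤ (L/3)||d^i||³ and for all i ≠ j, |(d^i)ᵀ(H − ∇²f(x^0))d^j| ≤ C Δ_D² for a constant C ≥ 0, where Δ_D = max_k ||d^k||. Then ||H − ∇²f(x^0)|| ≤ (p − 1/p) C ||(D/Δ_D)†||² + (L/3)||(D/Δ_D)†||² (2p − 2/p + 1) Δ_D. -/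

import Mathlib

open Matrix
open scoped RealInnerProductSpace

noncomputable section

abbrev Eu (n : ℕ) := EuclideanSpace ℝ (Fin n)

def IsMP {a b : ℕ} (A : Matrix (Fin a) (Fin b) ℝ) (A' : Matrix (Fin b) (Fin a) ℝ) : Prop :=
  A * A' * A = A ∧ A' * A * A' = A' ∧ (A * A')ᵀ = A * A' ∧ (A' * A)ᵀ = A' * A

def euclNorm {k : ℕ} (v : Fin k → ℝ) : ℝ := Real.sqrt (∑ i, v i ^ 2)

def spNorm {a b : ℕ} (A : Matrix (Fin a) (Fin b) ℝ) : ℝ :=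
  ⨆ v : {v : Fin b → ℝ // euclNorm v ≤ 1}, euclNorm (A.mulVec v.1)

def frobNorm {a b : ℕ} (A : Matrix (Fin a) (Fin b) ℝ) : ℝ :=
  Real.sqrt (∑ i, ∑ j, A i j ^ 2)

def mat1Norm {a b : ℕ} (A : Matrix (Fin a) (Fin b) ℝ) : ℝ := ⨆ j, ∑ i, |A i j|

lemma euclNorm_nonneg {k : ℕ} (v : Fin k → ℝ) : 0 ≤ euclNorm v := Real.sqrt_nonneg _

lemma euclNorm_sq {k : ℕ} (v : Fin k → ℝ) : euclNorm v ^ 2 = ∑ i, v i ^ 2 :=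
  Real.sq_sqrt (Finset.sum_nonneg fun i _ => sq_nonneg _)

lemma euclNorm_zero {k : ℕ} : euclNorm (0 : Fin k → ℝ) = 0 := by
  simp [euclNorm]

lemma dot_self_eq {k : ℕ} (v : Fin k → ℝ) : v ⬝ᵥ v = euclNorm v ^ 2 := by
  rw [euclNorm_sq]; simp [dotProduct, sq]

lemma euclNorm_smul {k : ℕ} (c : ℝ) (v : Fin k → ℝ) :
    euclNorm (c • v) = |c| * euclNorm v := by
  unfold euclNorm
  rw [← Real.sqrt_sq_eq_abs, ← Real.sqrt_mul (sq_nonneg c)]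
  congr 1
  simp [Finset.mul_sum, mul_pow]

lemma euclNorm_eq_zero {k : ℕ} {v : Fin k → ℝ} (h : euclNorm v = 0) : v = 0 := by
  have h2 : (∑ i, v i ^ 2) = 0 := by
    have := euclNorm_sq v; rw [h] at this; linarith [this.symm]
  funext i
  have := (Finset.sum_eq_zero_iff_of_nonneg (fun i _ => sq_nonneg (v i))).mp h2 i (by simp)
  exact pow_eq_zero_iff (by norm_num) |>.mp this

lemma cauchy_eucl {k : ℕ} (a b : Fin k → ℝ) :
    ∑ i, a i * b i ≤ euclNorm a * euclNorm b := by
  have h := Finset.sum_mul_sq_le_sq_mul_sq Finset.univ a b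
  have ha := euclNorm_nonneg a
  have hb := euclNorm_nonneg b
  have h1 : (∑ i, a i * b i) ^ 2 ≤ (euclNorm a * euclNorm b) ^ 2 := by
    rw [mul_pow, euclNorm_sq, euclNorm_sq]; exact h
  calc ∑ i, a i * b i ≤ |∑ i, a i * b i| := le_abs_self _
    _ = Real.sqrt ((∑ i, a i * b i) ^ 2) := (Real.sqrt_sq_eq_abs _).symm
    _ ≤ Real.sqrt ((euclNorm a * euclNorm b) ^ 2) := Real.sqrt_le_sqrt h1
    _ = euclNorm a * euclNorm b := Real.sqrt_sq (mul_nonneg ha hb)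

lemma bddAbove_sp {a b : ℕ} (A : Matrix (Fin a) (Fin b) ℝ) :
    BddAbove (Set.range fun v : {v : Fin b → ℝ // euclNorm v ≤ 1} => euclNorm (A.mulVec v.1)) := by
  refine ⟨Real.sqrt (∑ i, ∑ j, A i j ^ 2), ?_⟩
  rintro x ⟨⟨v, hv⟩, rfl⟩
  unfold euclNorm
  apply Real.sqrt_le_sqrt
  have hv2 : (∑ i, v i ^ 2) ≤ 1 := by
    have := euclNorm_sq v
    nlinarith [euclNorm_nonneg v]
  apply Finset.sum_le_sum
  intro i _
  calc (A.mulVec v i) ^ 2 = (∑ j, A i j * v j) ^ 2 := by rfl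
    _ ≤ (∑ j, A i j ^ 2) * ∑ j, v j ^ 2 := Finset.sum_mul_sq_le_sq_mul_sq _ _ _
    _ ≤ (∑ j, A i j ^ 2) * 1 := by
        apply mul_le_mul_of_nonneg_left hv2 (Finset.sum_nonneg fun j _ => sq_nonneg _)
    _ = ∑ j, A i j ^ 2 := mul_one _

lemma spNorm_nonneg {a b : ℕ} (A : Matrix (Fin a) (Fin b) ℝ) : 0 ≤ spNorm A := by
  have := le_ciSup (bddAbove_sp A) ⟨0, by simp [euclNorm_zero]⟩
  simpa [spNorm, euclNorm_zero] using (euclNorm_nonneg (A.mulVec 0)).trans this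

lemma euclNorm_mulVec_le {a b : ℕ} (A : Matrix (Fin a) (Fin b) ℝ) (v : Fin b → ℝ) :
    euclNorm (A.mulVec v) ≤ spNorm A * euclNorm v := by
  rcases eq_or_lt_of_le (euclNorm_nonneg v) with h | h
  · rw [euclNorm_eq_zero h.symm]
    simp [euclNorm_zero, spNorm_nonneg]
  · set c := euclNorm v with hc
    have hu : euclNorm (c⁻¹ • v) ≤ 1 := by
      rw [euclNorm_smul, abs_of_pos (inv_pos.mpr h)]
      rw [inv_mul_cancel₀ (ne_of_gt h)]
    have h1 : euclNorm (A.mulVec (c⁻¹ • v)) ≤ spNorm A :=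
      le_ciSup (bddAbove_sp A) (⟨c⁻¹ • v, hu⟩ : {v : Fin b → ℝ // euclNorm v ≤ 1})
    have h2 : A.mulVec v = c • A.mulVec (c⁻¹ • v) := by
      rw [Matrix.mulVec_smul, smul_smul, mul_inv_cancel₀ (ne_of_gt h), one_smul]
    rw [h2, euclNorm_smul, abs_of_pos h]
    rw [mul_comm (spNorm A) c]
    exact mul_le_mul_of_nonneg_left h1 (le_of_lt h)

lemma spNorm_le {a b : ℕ} (A : Matrix (Fin a) (Fin b) ℝ) (B : ℝ) (hB : 0 ≤ B)
    (h : ∀ v : Fin b → ℝ, euclNorm v ≤ 1 → euclNorm (A.mulVec v) ≤ B) : spNorm A ≤ B := by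
  haveI : Nonempty {v : Fin b → ℝ // euclNorm v ≤ 1} := ⟨⟨0, by simp [euclNorm_zero]⟩⟩
  apply ciSup_le
  rintro ⟨v, hv⟩
  exact h v hv

lemma offdiag_sum {k : ℕ} (a b : Fin k → ℝ) (ha : ∀ i, 0 ≤ a i) (hb : ∀ i, 0 ≤ b i) :
    ∑ i, ∑ j ∈ Finset.univ.erase i, a i * b j
      ≤ ((k : ℝ) - 1 / k) * (euclNorm a * euclNorm b) := by
  rcases Nat.lt_or_ge k 2 with hk | hk
  · interval_cases k
    · simp
    · simp [Fin.sum_univ_one]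
  · set S := ∑ j, b j with hS
    have hrw : ∀ i, ∑ j ∈ Finset.univ.erase i, b j = S - b i := by
      intro i
      have := Finset.add_sum_erase Finset.univ b (Finset.mem_univ i)
      linarith
    have e1 : ∑ i, ∑ j ∈ Finset.univ.erase i, a i * b j = ∑ i, a i * (S - b i) := by
      apply Finset.sum_congr rfl
      intro i _
      rw [← Finset.mul_sum, hrw]
    rw [e1]
    have hcs : (∑ i, a i * (S - b i)) ^ 2 ≤ (∑ i, a i ^ 2) * ∑ i, (S - b i) ^ 2 :=
      Finset.sum_mul_sq_le_sq_mul_sq _ _ _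
    have hSb : ∑ i, (S - b i) ^ 2 = (k : ℝ) * S ^ 2 - 2 * S * S + ∑ i, b i ^ 2 := by
      have e : ∀ i : Fin k, (S - b i) ^ 2 = S ^ 2 - 2 * S * b i + b i ^ 2 := fun i => by ring
      simp_rw [e]
      rw [Finset.sum_add_distrib, Finset.sum_sub_distrib, Finset.sum_const, ← Finset.mul_sum,
        ← hS]
      simp [Finset.card_univ]
    have hS2 : S ^ 2 ≤ (k : ℝ) * ∑ i, b i ^ 2 := by
      have := sq_sum_le_card_mul_sum_sq (s := Finset.univ) (f := b)
      simpa using this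
    have hbn : (0:ℝ) ≤ ∑ i, b i ^ 2 := Finset.sum_nonneg fun i _ => sq_nonneg _
    have han : (0:ℝ) ≤ ∑ i, a i ^ 2 := Finset.sum_nonneg fun i _ => sq_nonneg _
    have hk2 : (2:ℝ) ≤ (k:ℝ) := by exact_mod_cast hk
    have hkey : ∑ i, (S - b i) ^ 2 ≤ ((k:ℝ) - 1) ^ 2 * ∑ i, b i ^ 2 := by
      rw [hSb]; nlinarith
    have hub : (∑ i, a i * (S - b i)) ^ 2 ≤ (((k:ℝ) - 1) * (euclNorm a * euclNorm b)) ^ 2 := by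
      calc (∑ i, a i * (S - b i)) ^ 2 ≤ (∑ i, a i ^ 2) * (((k:ℝ)-1)^2 * ∑ i, b i ^ 2) := by
            nlinarith
        _ = (((k:ℝ) - 1) * (euclNorm a * euclNorm b)) ^ 2 := by
            rw [mul_pow, mul_pow, euclNorm_sq, euclNorm_sq]
            ring
    have hrhs0 : 0 ≤ ((k:ℝ) - 1) * (euclNorm a * euclNorm b) := by
      apply mul_nonneg (by linarith) (mul_nonneg (euclNorm_nonneg a) (euclNorm_nonneg b))
    have step : ∑ i, a i * (S - b i) ≤ ((k:ℝ) - 1) * (euclNorm a * euclNorm b) := by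
      nlinarith
    have hfin : ((k:ℝ) - 1) ≤ (k:ℝ) - 1 / k := by
      have : 1 / (k:ℝ) ≤ 1 := by
        apply div_le_one_of_le₀ (by linarith) (by linarith)
      linarith
    calc ∑ i, a i * (S - b i) ≤ ((k:ℝ) - 1) * (euclNorm a * euclNorm b) := step
      _ ≤ ((k:ℝ) - 1 / k) * (euclNorm a * euclNorm b) := by
          apply mul_le_mul_of_nonneg_right hfin
            (mul_nonneg (euclNorm_nonneg a) (euclNorm_nonneg b))

lemma euclNorm_abs {k : ℕ} (v : Fin k → ℝ) : euclNorm (fun i => |v i|) = euclNorm v := by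
  unfold euclNorm; simp [sq_abs]

lemma mulVec_dot {a b : ℕ} (M : Matrix (Fin a) (Fin b) ℝ) (x : Fin b → ℝ) (u : Fin a → ℝ) :
    (M.mulVec x) ⬝ᵥ u = x ⬝ᵥ (Mᵀ.mulVec u) := by
  rw [dotProduct_comm, Matrix.dotProduct_mulVec, dotProduct_comm, Matrix.mulVec_transpose]

lemma dot_mulVec_expand {k : ℕ} (a b : Fin k → ℝ) (G : Matrix (Fin k) (Fin k) ℝ) :
    a ⬝ᵥ G.mulVec b = ∑ i, ∑ j, a i * (G i j * b j) := by
  simp [dotProduct, Matrix.mulVec, Finset.mul_sum]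

lemma core_bound {k : ℕ} (a b : Fin k → ℝ) (G : Matrix (Fin k) (Fin k) ℝ)
    (Dg Off : ℝ) (hOff : 0 ≤ Off) (hDg : 0 ≤ Dg)
    (hdg : ∀ i, |G i i| ≤ Dg) (hof : ∀ i j, i ≠ j → |G i j| ≤ Off) :
    |a ⬝ᵥ G.mulVec b| ≤ Off * (((k:ℝ) - 1/k) * (euclNorm a * euclNorm b))
      + Dg * (euclNorm a * euclNorm b) := by
  rw [dot_mulVec_expand]
  have habs : |∑ i, ∑ j, a i * (G i j * b j)| ≤ ∑ i, ∑ j, |a i| * |G i j| * |b j| := by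
    calc |∑ i, ∑ j, a i * (G i j * b j)| ≤ ∑ i, |∑ j, a i * (G i j * b j)| :=
          Finset.abs_sum_le_sum_abs _ _
      _ ≤ ∑ i, ∑ j, |a i * (G i j * b j)| :=
          Finset.sum_le_sum fun i _ => Finset.abs_sum_le_sum_abs _ _
      _ = ∑ i, ∑ j, |a i| * |G i j| * |b j| := by
          apply Finset.sum_congr rfl; intro i _; apply Finset.sum_congr rfl; intro j _
          rw [abs_mul, abs_mul]; ring
  have hsplit : ∑ i, ∑ j, |a i| * |G i j| * |b j|
      = (∑ i, |a i| * |G i i| * |b i|)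
        + ∑ i, ∑ j ∈ Finset.univ.erase i, |a i| * |G i j| * |b j| := by
    rw [← Finset.sum_add_distrib]
    apply Finset.sum_congr rfl; intro i _
    exact (Finset.add_sum_erase _ _ (Finset.mem_univ i)).symm
  have hdiagsum : ∑ i, |a i| * |G i i| * |b i| ≤ Dg * (euclNorm a * euclNorm b) := by
    calc ∑ i, |a i| * |G i i| * |b i| ≤ ∑ i, Dg * (|a i| * |b i|) := by
          apply Finset.sum_le_sum; intro i _
          have h1 := hdg i
          nlinarith [abs_nonneg (a i), abs_nonneg (b i), abs_nonneg (G i i),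
            mul_nonneg (abs_nonneg (a i)) (abs_nonneg (b i))]
      _ = Dg * ∑ i, |a i| * |b i| := by rw [Finset.mul_sum]
      _ ≤ Dg * (euclNorm a * euclNorm b) := by
          apply mul_le_mul_of_nonneg_left _ hDg
          have := cauchy_eucl (fun i => |a i|) (fun i => |b i|)
          rwa [euclNorm_abs, euclNorm_abs] at this
  have hoffsum : ∑ i, ∑ j ∈ Finset.univ.erase i, |a i| * |G i j| * |b j|
      ≤ Off * (((k:ℝ) - 1/k) * (euclNorm a * euclNorm b)) := by
    calc ∑ i, ∑ j ∈ Finset.univ.erase i, |a i| * |G i j| * |b j|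
        ≤ ∑ i, ∑ j ∈ Finset.univ.erase i, Off * (|a i| * |b j|) := by
          apply Finset.sum_le_sum; intro i _
          apply Finset.sum_le_sum; intro j hj
          have hne : i ≠ j := (Finset.ne_of_mem_erase hj).symm
          have h1 := hof i j hne
          nlinarith [abs_nonneg (a i), abs_nonneg (b j), abs_nonneg (G i j),
            mul_nonneg (abs_nonneg (a i)) (abs_nonneg (b j))]
      _ = Off * ∑ i, ∑ j ∈ Finset.univ.erase i, |a i| * |b j| := by
          rw [Finset.mul_sum]; apply Finset.sum_congr rfl; intro i _; rw [Finset.mul_sum]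
      _ ≤ Off * (((k:ℝ) - 1/k) * (euclNorm a * euclNorm b)) := by
          apply mul_le_mul_of_nonneg_left _ hOff
          have := offdiag_sum (fun i => |a i|) (fun i => |b i|)
            (fun i => abs_nonneg _) (fun i => abs_nonneg _)
          rwa [euclNorm_abs, euclNorm_abs] at this
  linarith [habs, hsplit, hdiagsum, hoffsum]

lemma tri {n p : ℕ} (M' : Matrix (Fin n) (Fin p) ℝ) (E' : Matrix (Fin n) (Fin n) ℝ)
    (a b : Fin p → ℝ) :
    (M'.mulVec a) ⬝ᵥ E'.mulVec (M'.mulVec b) = a ⬝ᵥ (M'ᵀ * (E' * M')).mulVec b := by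
  rw [mulVec_dot]
  simp only [Matrix.mulVec_mulVec]

set_option maxHeartbeats 2000000 in
theorem stmt_18 {n p : ℕ} (hp : 0 < p) (f : Eu n → ℝ) (g : Eu n → Eu n)
    (Hf : Eu n → Matrix (Fin n) (Fin n) ℝ) (L : ℝ) (hL : 0 ≤ L)
    (hgrad : ∀ x, HasGradientAt f (g x) x)
    (hhess : ∀ x, HasFDerivAt g (Matrix.toEuclideanCLM (𝕜 := ℝ) (Hf x)) x)
    (hlip : ∀ x y, spNorm (Hf x - Hf y) ≤ L * ‖x - y‖)
    (x0 : Eu n) (d : Fin p → Eu n) (hd : ∀ i, d i ≠ 0)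
    (hspan : Submodule.span ℝ (Set.range d) = ⊤)
    (D : Matrix (Fin n) (Fin p) ℝ) (hD : ∀ k i, D k i = d i k)
    (Δ : ℝ) (hΔ : Δ = ⨆ k, ‖d k‖)
    (Dbp : Matrix (Fin p) (Fin n) ℝ) (hDbp : IsMP (Δ⁻¹ • D) Dbp)
    (H : Matrix (Fin n) (Fin n) ℝ) (hH : H.IsSymm)
    (C : ℝ) (hC : 0 ≤ C)
    (hdiag : ∀ i, |(d i) ⬝ᵥ (H - Hf x0).mulVec (d i)| ≤ L / 3 * ‖d i‖ ^ 3)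
    (hoff : ∀ i j, i ≠ j → |(d i) ⬝ᵥ (H - Hf x0).mulVec (d j)| ≤ C * Δ ^ 2) :
    spNorm (H - Hf x0)
      ≤ ((p : ℝ) - 1 / p) * C * spNorm Dbp ^ 2
        + L / 3 * spNorm Dbp ^ 2 * (2 * p - 2 / p + 1) * Δ := by
  haveI : Nonempty (Fin p) := ⟨⟨0, hp⟩⟩
  set E := H - Hf x0 with hE
  set M := Δ⁻¹ • D with hM
  set N := spNorm Dbp with hN
  have hbdd : BddAbove (Set.range fun k => ‖d k‖) := Set.Finite.bddAbove (Set.finite_range _)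
  have hdle : ∀ k, ‖d k‖ ≤ Δ := fun k => hΔ ▸ le_ciSup hbdd k
  have hΔpos : 0 < Δ := lt_of_lt_of_le (norm_pos_iff.mpr (hd ⟨0, hp⟩)) (hdle ⟨0, hp⟩)
  have hΔne : Δ ≠ 0 := ne_of_gt hΔpos
  have hp1 : (1:ℝ) ≤ (p:ℝ) := by exact_mod_cast hp
  have hq : 0 ≤ (p:ℝ) - 1/p := by
    have h1 : 1/(p:ℝ) ≤ 1 := div_le_one_of_le₀ hp1 (by linarith)
    linarith
  have hN0 : 0 ≤ N := spNorm_nonneg Dbp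
  have hL3 : (0:ℝ) ≤ L/3 := by linarith
  have hLΔ : (0:ℝ) ≤ L/3 * Δ := mul_nonneg hL3 hΔpos.le
  have hco : 0 ≤ C * ((p:ℝ) - 1/p) + L/3 * Δ := add_nonneg (mul_nonneg hC hq) hLΔ
  have hB0 : 0 ≤ (C * ((p:ℝ) - 1/p) + L/3 * Δ) * N ^ 2 := mul_nonneg hco (sq_nonneg N)
  -- surjectivity of M
  have hsurj : ∀ x : Fin n → ℝ, ∃ y, M.mulVec y = x := by
    intro x
    have hx : (WithLp.toLp 2 x : Eu n) ∈ Submodule.span ℝ (Set.range d) := by rw [hspan]; trivial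
    obtain ⟨c, hc⟩ := (Submodule.mem_span_range_iff_exists_fun ℝ).mp hx
    refine ⟨Δ • c, ?_⟩
    have hDc : D.mulVec c = x := by
      funext k
      have h1 : ∑ i, c i * d i k = x k := by
        have h2 := congrArg (EuclideanSpace.proj (𝕜 := ℝ) k) hc
        simpa [map_sum, ContinuousLinearMap.map_smul, smul_eq_mul] using h2
      simpa [Matrix.mulVec, dotProduct, hD, mul_comm] using h1
    rw [hM, Matrix.smul_mulVec, Matrix.mulVec_smul, hDc, smul_smul,
      inv_mul_cancel₀ hΔne, one_smul]
  have hMid : ∀ v : Fin n → ℝ, M.mulVec (Dbp.mulVec v) = v := by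
    intro v
    obtain ⟨y, hy⟩ := hsurj v
    rw [← hy]
    simp only [Matrix.mulVec_mulVec]
    rw [← Matrix.mul_assoc, hDbp.1]
  -- the Gram-type matrix
  set G := Mᵀ * (E * M) with hGdef
  have hGE : ∀ i j, G i j = Δ⁻¹ ^ 2 * ((d i) ⬝ᵥ E.mulVec (d j)) := by
    intro i j
    simp only [hGdef, hM, Matrix.mul_apply, Matrix.transpose_apply, Matrix.smul_apply,
      smul_eq_mul, Matrix.mulVec, dotProduct, hD, Finset.mul_sum]
    apply Finset.sum_congr rfl; intro k _
    apply Finset.sum_congr rfl; intro l _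
    ring
  have hGdiag : ∀ i, |G i i| ≤ L/3 * Δ := by
    intro i
    rw [hGE, abs_mul, abs_of_nonneg (by positivity : (0:ℝ) ≤ Δ⁻¹ ^ 2)]
    have h2 : ‖d i‖ ^ 3 ≤ Δ ^ 3 := pow_le_pow_left₀ (norm_nonneg _) (hdle i) 3
    have h3 : Δ⁻¹ ^ 2 * |d i ⬝ᵥ E.mulVec (d i)| ≤ Δ⁻¹ ^ 2 * (L/3 * Δ ^ 3) := by
      apply mul_le_mul_of_nonneg_left _ (by positivity)
      calc |d i ⬝ᵥ E.mulVec (d i)| ≤ L/3 * ‖d i‖ ^ 3 := hdiag i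
        _ ≤ L/3 * Δ ^ 3 := by nlinarith
    have h4 : Δ⁻¹ ^ 2 * (L/3 * Δ ^ 3) = L/3 * Δ := by field_simp
    linarith
  have hGoff : ∀ i j, i ≠ j → |G i j| ≤ C := by
    intro i j hij
    rw [hGE, abs_mul, abs_of_nonneg (by positivity : (0:ℝ) ≤ Δ⁻¹ ^ 2)]
    have h3 : Δ⁻¹ ^ 2 * |d i ⬝ᵥ E.mulVec (d j)| ≤ Δ⁻¹ ^ 2 * (C * Δ ^ 2) :=
      mul_le_mul_of_nonneg_left (hoff i j hij) (by positivity)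
    have h4 : Δ⁻¹ ^ 2 * (C * Δ ^ 2) = C := by field_simp
    linarith
  -- core bilinear bound
  have hcore : ∀ z v : Fin n → ℝ,
      |z ⬝ᵥ E.mulVec v|
        ≤ (C * ((p:ℝ) - 1/p) + L/3 * Δ) * (N ^ 2 * (euclNorm z * euclNorm v)) := by
    intro z v
    have key : z ⬝ᵥ E.mulVec v = (Dbp.mulVec z) ⬝ᵥ G.mulVec (Dbp.mulVec v) := by
      conv_lhs => rw [← hMid z, ← hMid v]
      exact tri M E (Dbp.mulVec z) (Dbp.mulVec v)
    rw [key]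
    have hcb := core_bound (Dbp.mulVec z) (Dbp.mulVec v) G (L/3 * Δ) C hC hLΔ hGdiag hGoff
    have haz : euclNorm (Dbp.mulVec z) ≤ N * euclNorm z := euclNorm_mulVec_le Dbp z
    have hbv : euclNorm (Dbp.mulVec v) ≤ N * euclNorm v := euclNorm_mulVec_le Dbp v
    have hab : euclNorm (Dbp.mulVec z) * euclNorm (Dbp.mulVec v)
        ≤ (N * euclNorm z) * (N * euclNorm v) :=
      mul_le_mul haz hbv (euclNorm_nonneg _) (mul_nonneg hN0 (euclNorm_nonneg _))
    have h5 : C * (((p:ℝ) - 1/p) * (euclNorm (Dbp.mulVec z) * euclNorm (Dbp.mulVec v)))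
        ≤ C * (((p:ℝ) - 1/p) * ((N * euclNorm z) * (N * euclNorm v))) :=
      mul_le_mul_of_nonneg_left (mul_le_mul_of_nonneg_left hab hq) hC
    have h6 : (L/3 * Δ) * (euclNorm (Dbp.mulVec z) * euclNorm (Dbp.mulVec v))
        ≤ (L/3 * Δ) * ((N * euclNorm z) * (N * euclNorm v)) :=
      mul_le_mul_of_nonneg_left hab hLΔ
    calc |(Dbp.mulVec z) ⬝ᵥ G.mulVec (Dbp.mulVec v)|
        ≤ C * (((p:ℝ) - 1/p) * ((N * euclNorm z) * (N * euclNorm v)))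
          + (L/3 * Δ) * ((N * euclNorm z) * (N * euclNorm v)) := by linarith
      _ = (C * ((p:ℝ) - 1/p) + L/3 * Δ) * (N ^ 2 * (euclNorm z * euclNorm v)) := by ring
  -- spectral norm bound
  have hfinal : spNorm E ≤ (C * ((p:ℝ) - 1/p) + L/3 * Δ) * N ^ 2 := by
    apply spNorm_le _ _ hB0
    intro v hv
    have h1 := hcore (E.mulVec v) v
    have h2 : euclNorm (E.mulVec v) ^ 2
        ≤ (C * ((p:ℝ) - 1/p) + L/3 * Δ)
          * (N ^ 2 * (euclNorm (E.mulVec v) * euclNorm v)) := by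
      calc euclNorm (E.mulVec v) ^ 2 = (E.mulVec v) ⬝ᵥ (E.mulVec v) := (dot_self_eq _).symm
        _ ≤ |(E.mulVec v) ⬝ᵥ E.mulVec v| := le_abs_self _
        _ ≤ _ := h1
    have ht0 : 0 ≤ euclNorm (E.mulVec v) := euclNorm_nonneg _
    rcases eq_or_lt_of_le ht0 with ht | ht
    · rw [← ht]; exact hB0
    · have h3 : (C * ((p:ℝ) - 1/p) + L/3 * Δ) * N ^ 2 * euclNorm v
          ≤ (C * ((p:ℝ) - 1/p) + L/3 * Δ) * N ^ 2 * 1 := by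
        apply mul_le_mul_of_nonneg_left hv hB0
      nlinarith [h2, h3, ht]
  have hnn : 0 ≤ L/3 * N ^ 2 * Δ * ((p:ℝ) - 1/p) :=
    mul_nonneg (mul_nonneg (mul_nonneg hL3 (sq_nonneg N)) hΔpos.le) hq
  calc spNorm E ≤ (C * ((p:ℝ) - 1/p) + L/3 * Δ) * N ^ 2 := hfinal
    _ ≤ ((p : ℝ) - 1 / p) * C * N ^ 2 + L / 3 * N ^ 2 * (2 * p - 2 / p + 1) * Δ := by
        have hid : ((p:ℝ) - 1/p) * C * N ^ 2 + L/3 * N ^ 2 * (2*p - 2/p + 1) * Δ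
            - (C * ((p:ℝ) - 1/p) + L/3 * Δ) * N ^ 2
            = 2 * (L/3 * N ^ 2 * Δ * ((p:ℝ) - 1/p)) := by ring
        linarith [hnn, hid]
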